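/- Let A be a C*-algebra, E and F Hilbert A-modules, and T : E → F adjointable with adjoint T*. Suppose there is an adjointable W : E → F with ‖W‖ ≤ 1 and adjoint W* satisfying W∘(T*∘T)∘W* = T∘T* and W*∘(T∘T*)∘W = T*∘T (these identities hold for the partial isometry in the polar decomposition of T whenever E = ker T ⊕ closure(ran T*) and F = ker T* ⊕ closure(ran T)). Then π̃₂(T) = π̃₂(T*), where π̃₂(T*) is computed with μₙ on F. -/

import Mathlib

open scoped InnerProductSpace RightActions ENNReal

noncomputable section

/-- The Hilbert C⋆-module class as Mathlib defined it in December 2024 (right `A`-action through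
`Aᵐᵒᵖ`, inner product right `A`-linear in the second variable). Mathlib's `CStarModule` has since
changed meaning (left action), so the old notion is kept here under a new name. -/
class RightCStarModule (A : outParam <| Type*) (E : Type*) [NonUnitalSemiring A] [StarRing A] [Module ℂ A]
    [AddCommGroup E] [Module ℂ E] [PartialOrder A] [SMul Aᵐᵒᵖ E] [Norm A] [Norm E]
    extends Inner A E where
  inner_add_right {x} {y} {z} : inner x (y + z) = inner x y + inner x z
  inner_self_nonneg {x} : 0 ≤ inner x x
  inner_self {x} : inner x x = 0 ↔ x = 0
  inner_op_smul_right {a : A} {x y : E} : inner x (y <• a) = inner x y * a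
  inner_smul_right_complex {z : ℂ} {x} {y} : inner x (z • y) = z • inner x y
  star_inner x y : star (inner x y) = inner y x
  norm_eq_sqrt_norm_inner_self x : ‖x‖ = Real.sqrt ‖inner x x‖

variable {A : Type*} [NonUnitalCStarAlgebra A] [PartialOrder A] [StarOrderedRing A]
variable {E : Type*} [NormedAddCommGroup E] [NormedSpace ℂ E] [SMul Aᵐᵒᵖ E]
  [RightCStarModule A E] [CompleteSpace E]
variable {F : Type*} [NormedAddCommGroup F] [NormedSpace ℂ F] [SMul Aᵐᵒᵖ F]
  [RightCStarModule A F] [CompleteSpace F]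

/-- `μₙ(x₁,…,xₙ) = sup { ‖Σᵢ ⟪xᵢ, y⟫⟪y, xᵢ⟫‖^(1/2) : y ∈ E, ‖y‖ ≤ 1 }`. -/
def mu {G : Type*} [NormedAddCommGroup G] [NormedSpace ℂ G] [SMul Aᵐᵒᵖ G]
    [RightCStarModule A G] {n : ℕ} (x : Fin n → G) : ℝ :=
  ⨆ y : {y : G // ‖y‖ ≤ 1}, Real.sqrt ‖∑ i, ⟪x i, (y : G)⟫_A * ⟪(y : G), x i⟫_A‖

/-- `π̃₂(T) = sup { ‖Σᵢ ⟪Txᵢ, Txᵢ⟫‖^(1/2) : n ∈ ℕ, μₙ(x₁,…,xₙ) ≤ 1 }` as an element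
of `[0,∞]`. -/
def piTwo {G H : Type*} [NormedAddCommGroup G] [NormedSpace ℂ G] [SMul Aᵐᵒᵖ G]
    [RightCStarModule A G] [NormedAddCommGroup H] [NormedSpace ℂ H] [SMul Aᵐᵒᵖ H]
    [RightCStarModule A H] (T : G → H) : ℝ≥0∞ :=
  ⨆ (n : ℕ) (x : Fin n → G) (_ : mu x ≤ 1),
    ENNReal.ofReal (Real.sqrt ‖∑ i, ⟪T (x i), T (x i)⟫_A‖)

section Aux

variable {G : Type*} [NormedAddCommGroup G] [NormedSpace ℂ G] [SMul Aᵐᵒᵖ G] [RightCStarModule A G]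
variable {H : Type*} [NormedAddCommGroup H] [NormedSpace ℂ H] [SMul Aᵐᵒᵖ H] [RightCStarModule A H]

lemma rcs_inner_zero_right {x : G} : ⟪x, (0 : G)⟫_A = 0 := by
  rw [← zero_smul ℂ (0 : G), RightCStarModule.inner_smul_right_complex, zero_smul]

lemma rcs_inner_zero_left {x : G} : ⟪(0 : G), x⟫_A = 0 := by
  rw [← RightCStarModule.star_inner x 0, rcs_inner_zero_right, star_zero]

def rcsInnerR (x : G) : G →+ A where
  toFun y := ⟪x, y⟫_A
  map_zero' := rcs_inner_zero_right
  map_add' _ _ := RightCStarModule.inner_add_right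

lemma rcs_inner_sub_right {x y z : G} : ⟪x, y - z⟫_A = ⟪x, y⟫_A - ⟪x, z⟫_A :=
  map_sub (rcsInnerR (A := A) x) y z

lemma rcs_inner_sub_left {x y z : G} : ⟪x - y, z⟫_A = ⟪x, z⟫_A - ⟪y, z⟫_A := by
  rw [← RightCStarModule.star_inner z (x - y), rcs_inner_sub_right, star_sub,
    RightCStarModule.star_inner, RightCStarModule.star_inner]

lemma rcs_inner_op_smul_left {a : A} {x y : G} : ⟪x <• a, y⟫_A = star a * ⟪x, y⟫_A := by
  rw [← RightCStarModule.star_inner y (x <• a), RightCStarModule.inner_op_smul_right, star_mul,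
    RightCStarModule.star_inner]

lemma rcs_inner_smul_right_real {t : ℝ} {x y : G} : ⟪x, t • y⟫_A = t • ⟪x, y⟫_A := by
  rw [RCLike.real_smul_eq_coe_smul (K := ℂ) t y, RightCStarModule.inner_smul_right_complex,
    ← RCLike.real_smul_eq_coe_smul]

lemma rcs_inner_smul_left_real {t : ℝ} {x y : G} : ⟪t • x, y⟫_A = t • ⟪x, y⟫_A := by
  rw [← RightCStarModule.star_inner y (t • x), rcs_inner_smul_right_real,
    RCLike.real_smul_eq_coe_smul (K := ℂ) t ⟪y, x⟫_A, star_smul, Complex.star_def,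
    RCLike.conj_ofReal, RightCStarModule.star_inner, ← RCLike.real_smul_eq_coe_smul]

lemma rcs_isSelfAdjoint_inner_self {x : G} : IsSelfAdjoint ⟪x, x⟫_A :=
  RightCStarModule.star_inner _ _

lemma rcs_norm_sq_eq {x : G} : ‖x‖ ^ 2 = ‖⟪x, x⟫_A‖ := by
  rw [RightCStarModule.norm_eq_sqrt_norm_inner_self x, Real.sq_sqrt (norm_nonneg _)]

lemma rcs_inner_mul_inner_le {x y : G} (hx : x ≠ 0) :
    ⟪y, x⟫_A * ⟪x, y⟫_A ≤ ‖x‖ ^ 2 • ⟪y, y⟫_A := by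
  have ht : 0 < ‖x‖ ^ 2 := by
    have : 0 < ‖x‖ := norm_pos_iff.2 hx
    positivity
  have e : ⟪x <• ⟪x, y⟫_A - ‖x‖ ^ 2 • y, x <• ⟪x, y⟫_A - ‖x‖ ^ 2 • y⟫_A
      = star ⟪x, y⟫_A * (⟪x, x⟫_A * ⟪x, y⟫_A) - ‖x‖ ^ 2 • (star ⟪x, y⟫_A * ⟪x, y⟫_A)
        - ‖x‖ ^ 2 • (⟪y, x⟫_A * ⟪x, y⟫_A) + ‖x‖ ^ 2 • ‖x‖ ^ 2 • ⟪y, y⟫_A := by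
    simp only [rcs_inner_sub_left, rcs_inner_sub_right, RightCStarModule.inner_op_smul_right,
      rcs_inner_op_smul_left, rcs_inner_smul_left_real, rcs_inner_smul_right_real, mul_sub, sub_mul, smul_mul_assoc,
      mul_smul_comm, smul_sub, mul_assoc]
    abel
  have h0 : (0 : A) ≤ ⟪x <• ⟪x, y⟫_A - ‖x‖ ^ 2 • y, x <• ⟪x, y⟫_A - ‖x‖ ^ 2 • y⟫_A :=
    RightCStarModule.inner_self_nonneg
  rw [e] at h0
  have h1 : star ⟪x, y⟫_A * (⟪x, x⟫_A * ⟪x, y⟫_A) ≤ ‖x‖ ^ 2 • (star ⟪x, y⟫_A * ⟪x, y⟫_A) := by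
    rw [← mul_assoc, rcs_norm_sq_eq (A := A)]
    exact CStarAlgebra.star_left_conjugate_le_norm_smul (hb := rcs_isSelfAdjoint_inner_self)
  have h2 : (0 : A) ≤ ‖x‖ ^ 2 • (star ⟪x, y⟫_A * ⟪x, y⟫_A) - ‖x‖ ^ 2 • (star ⟪x, y⟫_A * ⟪x, y⟫_A)
        - ‖x‖ ^ 2 • (⟪y, x⟫_A * ⟪x, y⟫_A) + ‖x‖ ^ 2 • ‖x‖ ^ 2 • ⟪y, y⟫_A :=
    h0.trans (by gcongr)
  rw [RightCStarModule.star_inner x y] at h2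
  have h3 : ‖x‖ ^ 2 • (⟪y, x⟫_A * ⟪x, y⟫_A) - ‖x‖ ^ 2 • (⟪y, x⟫_A * ⟪x, y⟫_A)
        - ‖x‖ ^ 2 • (⟪y, x⟫_A * ⟪x, y⟫_A) + ‖x‖ ^ 2 • ‖x‖ ^ 2 • ⟪y, y⟫_A
      = ‖x‖ ^ 2 • ‖x‖ ^ 2 • ⟪y, y⟫_A - ‖x‖ ^ 2 • (⟪y, x⟫_A * ⟪x, y⟫_A) := by abel
  rw [h3] at h2
  rw [← smul_le_smul_iff_of_pos_left ht]
  exact sub_nonneg.1 h2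

lemma rcs_norm_inner_le {x y : G} : ‖⟪x, y⟫_A‖ ≤ ‖x‖ * ‖y‖ := by
  rcases eq_or_ne x 0 with h | h
  · rw [h, rcs_inner_zero_left, norm_zero]; positivity
  have hc := rcs_inner_mul_inner_le (A := A) (y := y) h
  have : ‖⟪x, y⟫_A‖ ^ 2 ≤ (‖x‖ * ‖y‖) ^ 2 := by
    calc ‖⟪x, y⟫_A‖ ^ 2 = ‖⟪y, x⟫_A * ⟪x, y⟫_A‖ := by
          rw [← RightCStarModule.star_inner x y, CStarRing.norm_star_mul_self, pow_two]
    _ ≤ ‖‖x‖ ^ 2 • ⟪y, y⟫_A‖ := by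
          refine CStarAlgebra.norm_le_norm_of_nonneg_of_le ?_ hc
          rw [← RightCStarModule.star_inner x y]
          exact star_mul_self_nonneg _
    _ = ‖x‖ ^ 2 * ‖⟪y, y⟫_A‖ := by rw [norm_smul, Real.norm_of_nonneg (by positivity)]
    _ = ‖x‖ ^ 2 * ‖y‖ ^ 2 := by rw [rcs_norm_sq_eq (A := A) (x := y)]
    _ = (‖x‖ * ‖y‖) ^ 2 := by ring
  exact (pow_le_pow_iff_left₀ (norm_nonneg _) (by positivity) (by norm_num)).mp this

lemma mu_bddAbove {n : ℕ} (x : Fin n → G) :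
    BddAbove (Set.range fun y : {y : G // ‖y‖ ≤ 1} =>
      Real.sqrt ‖∑ i, ⟪x i, (y : G)⟫_A * ⟪(y : G), x i⟫_A‖) := by
  refine ⟨Real.sqrt (∑ i, ‖x i‖ ^ 2), ?_⟩
  rintro _ ⟨y, rfl⟩
  apply Real.sqrt_le_sqrt
  refine (norm_sum_le _ _).trans (Finset.sum_le_sum fun i _ => ?_)
  calc ‖⟪x i, (y : G)⟫_A * ⟪(y : G), x i⟫_A‖
      ≤ ‖⟪x i, (y : G)⟫_A‖ * ‖⟪(y : G), x i⟫_A‖ := norm_mul_le _ _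
    _ ≤ (‖x i‖ * ‖(y : G)‖) * (‖(y : G)‖ * ‖x i‖) := by
        gcongr <;> exact rcs_norm_inner_le
    _ ≤ (‖x i‖ * 1) * (1 * ‖x i‖) := by
        have hy := y.2
        gcongr
    _ = ‖x i‖ ^ 2 := by ring

lemma piTwo_le_aux (T : G →L[ℂ] H) (T' : H →L[ℂ] G)
    (hT : ∀ (x : G) (y : H), ⟪T x, y⟫_A = ⟪x, T' y⟫_A)
    (W : G →L[ℂ] H) (W' : H →L[ℂ] G)
    (hW : ∀ (x : G) (y : H), ⟪W x, y⟫_A = ⟪x, W' y⟫_A)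
    (hW' : ∀ y : H, ‖W' y‖ ≤ ‖y‖)
    (h2 : ∀ x : G, W' (T (T' (W x))) = T' (T x)) :
    piTwo (A := A) ⇑T ≤ piTwo (A := A) ⇑T' := by
  haveI : Nonempty {y : H // ‖y‖ ≤ 1} := ⟨⟨0, by simp⟩⟩
  rw [piTwo, piTwo]
  refine iSup_le fun n => iSup_le fun x => iSup_le fun hx => ?_
  have hmu : mu (A := A) (fun i => W (x i)) ≤ 1 := by
    rw [mu]
    refine ciSup_le fun y => ?_
    have key : ∀ i, ⟪W (x i), (y : H)⟫_A * ⟪(y : H), W (x i)⟫_A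
        = ⟪x i, W' (y : H)⟫_A * ⟪W' (y : H), x i⟫_A := by
      intro i
      have h1 : ⟪W (x i), (y : H)⟫_A = ⟪x i, W' (y : H)⟫_A := hW _ _
      have h2' : ⟪(y : H), W (x i)⟫_A = ⟪W' (y : H), x i⟫_A := by
        rw [← RightCStarModule.star_inner, h1, RightCStarModule.star_inner]
      rw [h1, h2']
    simp only [key]
    have hy : ‖W' (y : H)‖ ≤ 1 := (hW' _).trans y.2
    calc Real.sqrt ‖∑ i, ⟪x i, W' (y : H)⟫_A * ⟪W' (y : H), x i⟫_A‖
        ≤ mu (A := A) x := le_ciSup (mu_bddAbove (A := A) x) ⟨W' (y : H), hy⟩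
      _ ≤ 1 := hx
  have key2 : ∀ i, ⟪T (x i), T (x i)⟫_A = ⟪T' (W (x i)), T' (W (x i))⟫_A := by
    intro i
    calc ⟪T (x i), T (x i)⟫_A = ⟪x i, T' (T (x i))⟫_A := hT _ _
      _ = ⟪x i, W' (T (T' (W (x i))))⟫_A := by rw [h2]
      _ = ⟪W (x i), T (T' (W (x i)))⟫_A := (hW _ _).symm
      _ = star ⟪T (T' (W (x i))), W (x i)⟫_A := (RightCStarModule.star_inner _ _).symm
      _ = star ⟪T' (W (x i)), T' (W (x i))⟫_A := by rw [hT]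
      _ = ⟪T' (W (x i)), T' (W (x i))⟫_A := rcs_isSelfAdjoint_inner_self
  refine le_iSup_of_le n (le_iSup_of_le (fun i => W (x i)) (le_iSup_of_le hmu ?_))
  simp only [key2]
  exact le_rfl

end Aux

/-- If `T : E → F` is adjointable with adjoint `T'`, and there is an adjointable contraction
`W : E → F` with `W∘(T*∘T)∘W* = T∘T*` and `W*∘(T∘T*)∘W = T*∘T` (as holds for the partial
isometry in the polar decomposition of `T` when `ker T` and `ker T*` are complemented by the
closures of the ranges of `T*` and `T`), then `π̃₂(T) = π̃₂(T*)`. -/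
theorem piTwo_eq_piTwo_adjoint (T : E →L[ℂ] F) (T' : F →L[ℂ] E)
    (hT : ∀ (x : E) (y : F), ⟪T x, y⟫_A = ⟪x, T' y⟫_A)
    (W : E →L[ℂ] F) (W' : F →L[ℂ] E)
    (hW : ∀ (x : E) (y : F), ⟪W x, y⟫_A = ⟪x, W' y⟫_A)
    (hWnorm : ‖W‖ ≤ 1)
    (hW1 : (W.comp ((T'.comp T).comp W')) = T.comp T')
    (hW2 : (W'.comp ((T.comp T').comp W)) = T'.comp T) :
    piTwo (⇑T) = piTwo (⇑T') := by
  have hWn : ∀ x : E, ‖W x‖ ≤ ‖x‖ := fun x =>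
    (W.le_opNorm x).trans (by nlinarith [norm_nonneg x])
  have hW'n : ∀ y : F, ‖W' y‖ ≤ ‖y‖ := by
    intro y
    have hsq : ‖W' y‖ ^ 2 ≤ ‖W' y‖ * ‖y‖ := by
      have h1 : ‖W' y‖ ^ 2 = ‖⟪W' y, W' y⟫_A‖ := rcs_norm_sq_eq
      have h2 : ⟪W' y, W' y⟫_A = ⟪W (W' y), y⟫_A := (hW _ _).symm
      calc ‖W' y‖ ^ 2 = ‖⟪W (W' y), y⟫_A‖ := by rw [h1, h2]
        _ ≤ ‖W (W' y)‖ * ‖y‖ := rcs_norm_inner_le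
        _ ≤ ‖W' y‖ * ‖y‖ := by
            have := hWn (W' y)
            gcongr
    rcases eq_or_lt_of_le (norm_nonneg (W' y)) with h | h
    · rw [← h]; exact norm_nonneg y
    · nlinarith
  have hT' : ∀ (y : F) (x : E), ⟪T' y, x⟫_A = ⟪y, T x⟫_A := by
    intro y x
    calc ⟪T' y, x⟫_A = star ⟪x, T' y⟫_A := (RightCStarModule.star_inner _ _).symm
      _ = star ⟪T x, y⟫_A := by rw [hT]
      _ = ⟪y, T x⟫_A := RightCStarModule.star_inner _ _
  have hWa : ∀ (y : F) (x : E), ⟪W' y, x⟫_A = ⟪y, W x⟫_A := by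
    intro y x
    calc ⟪W' y, x⟫_A = star ⟪x, W' y⟫_A := (RightCStarModule.star_inner _ _).symm
      _ = star ⟪W x, y⟫_A := by rw [hW]
      _ = ⟪y, W x⟫_A := RightCStarModule.star_inner _ _
  have e2 : ∀ x : E, W' (T (T' (W x))) = T' (T x) := by
    intro x
    have := ContinuousLinearMap.ext_iff.mp hW2 x
    simpa using this
  have e1 : ∀ y : F, W (T' (T (W' y))) = T (T' y) := by
    intro y
    have := ContinuousLinearMap.ext_iff.mp hW1 y
    simpa using this
  refine le_antisymm ?_ ?_
  · exact piTwo_le_aux T T' hT W W' hW hW'n e2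
  · exact piTwo_le_aux T' T hT' W' W hWa hWn e1
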